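/- arXiv:2511.23328 — 2 statements merged into one kernel-verified Lean document; each statement's English description precedes it below -/
import Mathlib

section
/- (Suppression effect, Proposition 2.) Define S(τ̂) = μ((0, τ̂·θ_H·z]) and R(τ̂) = r·μ((0, (θ_H·v − c)/S(τ̂))). If 0 ≤ τ̂₁ ≤ τ̂₂ and S(τ̂₁) > 0, then S(τ̂₁) ≤ S(τ̂₂) and R(τ̂₂) ≤ R(τ̂₁): an increase in perceived HIV transmission risk weakly raises the stigma level and weakly lowers the HIV testing rate. The same monotonicity holds for the testing rate among high-risk individuals R_H(τ̂) = μ((0, (θ_H·v − c)/S(τ̂))). -/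
open MeasureTheory

/-- The stigma level `S(τ̂) = μ((0, τ̂·θ_H·z])`. -/
noncomputable def stigma (μ : Measure ℝ) (θH z τ : ℝ) : ℝ :=
  (μ (Set.Ioc 0 (τ * θH * z))).toReal

/-- The testing rate among high-risk individuals
`R_H(τ̂) = μ((0, (θ_H·v − c)/S(τ̂)))`. -/
noncomputable def testingRateH (μ : Measure ℝ) (θH v c z τ : ℝ) : ℝ :=
  (μ (Set.Ioo 0 ((θH * v - c) / stigma μ θH z τ))).toReal

/-- Suppression effect, Proposition 2: if `0 ≤ τ̂₁ ≤ τ̂₂` and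
`S(τ̂₁) > 0`, then `S(τ̂₁) ≤ S(τ̂₂)`, `R(τ̂₂) ≤ R(τ̂₁)` and `R_H(τ̂₂) ≤ R_H(τ̂₁)`. -/
theorem suppression_effect
    (μ : Measure ℝ) [IsProbabilityMeasure μ] (hμ : μ (Set.Ioi (0 : ℝ)) = 1)
    (θL θH v c z r : ℝ)
    (hθL : 0 < θL) (hθLH : θL < θH) (hθH : θH < 1)
    (hv : 0 < v) (hc : 0 < c)
    (hA1L : θL * v < c) (hA1H : c < θH * v)
    (hz : 0 < z) (hr : 0 ≤ r)
    (τ₁ τ₂ : ℝ) (hτ₁ : 0 ≤ τ₁) (hτ₁₂ : τ₁ ≤ τ₂)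
    (hS₁ : 0 < stigma μ θH z τ₁) :
    stigma μ θH z τ₁ ≤ stigma μ θH z τ₂ ∧
    r * testingRateH μ θH v c z τ₂ ≤ r * testingRateH μ θH v c z τ₁ ∧
    testingRateH μ θH v c z τ₂ ≤ testingRateH μ θH v c z τ₁ := by
  have hθHpos : 0 < θH := hθL.trans hθLH
  have hmul : τ₁ * θH * z ≤ τ₂ * θH * z := by
    have := mul_le_mul_of_nonneg_right hτ₁₂ (le_of_lt hθHpos)
    exact mul_le_mul_of_nonneg_right this hz.le
  have hS : stigma μ θH z τ₁ ≤ stigma μ θH z τ₂ := by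
    unfold stigma
    refine ENNReal.toReal_mono (measure_ne_top μ _) (measure_mono ?_)
    exact Set.Ioc_subset_Ioc le_rfl hmul
  have hS₂ : 0 < stigma μ θH z τ₂ := lt_of_lt_of_le hS₁ hS
  have hnum : 0 < θH * v - c := sub_pos.mpr hA1H
  have hdiv : (θH * v - c) / stigma μ θH z τ₂ ≤ (θH * v - c) / stigma μ θH z τ₁ :=
    div_le_div_of_nonneg_left hnum.le hS₁ hS
  have hR : testingRateH μ θH v c z τ₂ ≤ testingRateH μ θH v c z τ₁ := by
    unfold testingRateH
    refine ENNReal.toReal_mono (measure_ne_top μ _) (measure_mono ?_)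
    exact Set.Ioo_subset_Ioo le_rfl hdiv
  exact ⟨hS, mul_le_mul_of_nonneg_left hR hr, hR⟩
end

section
/- (Strict monotonicity of the gap in stigma.) If 0 ≤ S₁ < S₂ and μ assigns positive measure to the interval (0, (θ_H·v − c)/S₂), then ∫ max(θ_H·v − c − y·S₂, 0) dμ(y) < ∫ max(θ_H·v − c − y·S₁, 0) dμ(y), and hence D(S₁) < D(S₂): higher stigma strictly widens the expected continuation-value gap between low- and high-risk types. -/
open MeasureTheory

/-- The expected continuation-value gap
`D(S) = (θ_H − θ_L)·c_h − ∫ max(θ_H·v − c − y·S, 0) dμ(y)`. -/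
noncomputable def gapD (μ : Measure ℝ) (θL θH v c ch S : ℝ) : ℝ :=
  (θH - θL) * ch - ∫ y, max (θH * v - c - y * S) 0 ∂μ

/-- Strict monotonicity of the gap in stigma: if `0 ≤ S₁ < S₂` and
`μ((0, (θ_H·v − c)/S₂)) > 0`, then
`∫ max(θ_H·v − c − y·S₂, 0) dμ < ∫ max(θ_H·v − c − y·S₁, 0) dμ` and
`D(S₁) < D(S₂)`. -/
theorem gap_strict_mono
    (μ : Measure ℝ) [IsProbabilityMeasure μ] (hμ : μ (Set.Ioi (0 : ℝ)) = 1)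
    (θL θH v c ch : ℝ)
    (hθL : 0 < θL) (hθLH : θL < θH) (hθH : θH < 1)
    (hv : 0 < v) (hc : 0 < c)
    (hA1L : θL * v < c) (hA1H : c < θH * v)
    (hch : 0 < ch)
    (S₁ S₂ : ℝ) (hS₁ : 0 ≤ S₁) (hS₁₂ : S₁ < S₂)
    (hpos : 0 < μ (Set.Ioo 0 ((θH * v - c) / S₂))) :
    (∫ y, max (θH * v - c - y * S₂) 0 ∂μ)
      < (∫ y, max (θH * v - c - y * S₁) 0 ∂μ) ∧
    gapD μ θL θH v c ch S₁ < gapD μ θL θH v c ch S₂ := by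
  set A : ℝ := θH * v - c with hA
  have hApos : 0 < A := by simp [hA]; linarith
  have hS₂ : 0 < S₂ := lt_of_le_of_lt hS₁ hS₁₂
  -- a.e. y > 0
  have hae : ∀ᵐ y ∂μ, 0 < y := by
    have hcompl : μ (Set.Ioi (0:ℝ))ᶜ = 0 := by
      rw [measure_compl measurableSet_Ioi (measure_ne_top μ _), hμ, measure_univ]
      simp
    filter_upwards [measure_eq_zero_iff_ae_notMem.mp hcompl] with y hy
    simpa using hy
  -- integrability of both integrands
  have hint : ∀ S : ℝ, 0 ≤ S → Integrable (fun y => max (A - y * S) 0) μ := by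
    intro S hS
    refine Integrable.mono' (integrable_const A) ?_ ?_
    · exact (Continuous.max (by continuity) continuous_const).aestronglyMeasurable
    · filter_upwards [hae] with y hy
      rw [Real.norm_eq_abs, abs_of_nonneg (le_max_right _ _)]
      have : 0 ≤ y * S := mul_nonneg hy.le hS
      refine max_le (by linarith) hApos.le
  have hint₁ := hint S₁ hS₁
  have hint₂ := hint S₂ hS₂.le
  -- the difference
  set g : ℝ → ℝ := fun y => max (A - y * S₁) 0 - max (A - y * S₂) 0 with hg
  have hgint : Integrable g μ := hint₁.sub hint₂
  have hgnn : 0 ≤ᵐ[μ] g := by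
    filter_upwards [hae] with y hy
    have : y * S₁ ≤ y * S₂ := mul_le_mul_of_nonneg_left hS₁₂.le hy.le
    simp only [hg, Pi.zero_apply, sub_nonneg]
    exact max_le_max (by linarith) le_rfl
  have hsupp : Set.Ioo (0:ℝ) (A / S₂) ⊆ Function.support g := by
    intro y hy
    have hy0 : 0 < y := hy.1
    have hyA : y * S₂ < A := (lt_div_iff₀ hS₂).mp hy.2
    have h1 : y * S₁ < y * S₂ := mul_lt_mul_of_pos_left hS₁₂ hy0
    have hg2 : max (A - y * S₂) 0 = A - y * S₂ := max_eq_left (by linarith)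
    have hg1 : A - y * S₂ < max (A - y * S₁) 0 :=
      lt_of_lt_of_le (by linarith) (le_max_left _ _)
    simp only [Function.mem_support, hg]
    rw [hg2]
    exact ne_of_gt (by linarith)
  have hgpos : 0 < ∫ y, g y ∂μ := by
    rw [integral_pos_iff_support_of_nonneg_ae hgnn hgint]
    exact lt_of_lt_of_le hpos (measure_mono hsupp)
  have hlt : (∫ y, max (A - y * S₂) 0 ∂μ) < ∫ y, max (A - y * S₁) 0 ∂μ := by
    have := integral_sub hint₁ hint₂
    simp only [hg] at hgpos
    rw [this] at hgpos
    linarith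
  exact ⟨hlt, by simp only [gapD, ← hA]; linarith⟩
end
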